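/- Let Z be a proper geodesic δ-hyperbolic space and σ, σ': [0,∞) → Z geodesic rays with the same endpoint at infinity (i.e. the images of σ and σ' are at finite Hausdorff distance). Then for all y, z ∈ Z, |β_σ(y,z) − β_{σ'}(y,z)| ≤ 40δ. -/
import Mathlib


open Filter Metric Set

noncomputable def gromovProd {Z : Type*} [MetricSpace Z] (x y z : Z) : ℝ :=
  (dist x y + dist x z - dist y z) / 2

/-- `Z` is δ-hyperbolic in the Gromov product sense. -/
def IsDeltaHyperbolic (Z : Type*) [MetricSpace Z] (δ : ℝ) : Prop :=
  ∀ w x y z : Z, min (gromovProd x w y) (gromovProd x y z) - δ ≤ gromovProd x w z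

/-- `f` parametrizes a geodesic segment from `x` to `y` by arclength on `[0, dist x y]`. -/
def IsGeodesicSegment {Z : Type*} [MetricSpace Z] (f : ℝ → Z) (x y : Z) : Prop :=
  f 0 = x ∧ f (dist x y) = y ∧
    ∀ s ∈ Set.Icc (0:ℝ) (dist x y), ∀ t ∈ Set.Icc (0:ℝ) (dist x y),
      dist (f s) (f t) = |s - t|

/-- `Z` is a geodesic metric space. -/
def IsGeodesicSpace (Z : Type*) [MetricSpace Z] : Prop :=
  ∀ x y : Z, ∃ f : ℝ → Z, IsGeodesicSegment f x y

/-- The image of the geodesic segment `[x,y]` parametrized by `f`. -/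
def segImage {Z : Type*} [MetricSpace Z] (f : ℝ → Z) (x y : Z) : Set Z :=
  f '' Set.Icc 0 (dist x y)

/-- A geodesic ray: an isometric embedding of `[0,∞)`. -/
def IsGeodesicRay {Z : Type*} [MetricSpace Z] (σ : ℝ → Z) : Prop :=
  ∀ s t : ℝ, 0 ≤ s → 0 ≤ t → dist (σ s) (σ t) = |s - t|

/-- A bi-infinite geodesic: an isometric embedding of `ℝ`. -/
def IsBiInfGeodesic {Z : Type*} [MetricSpace Z] (γ : ℝ → Z) : Prop :=
  ∀ s t : ℝ, dist (γ s) (γ t) = |s - t|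

/-- Two geodesic rays are asymptotic (same endpoint at infinity):
their images are at finite Hausdorff distance. -/
def AsymptoticRays {Z : Type*} [MetricSpace Z] (σ σ' : ℝ → Z) : Prop :=
  EMetric.hausdorffEdist (σ '' Set.Ici 0) (σ' '' Set.Ici 0) ≠ ⊤

/-- Extended Gromov product (with respect to `x`) of the two boundary points
represented by the geodesic rays `σ`, `σ'`. -/
noncomputable def extGP {Z : Type*} [MetricSpace Z] (x : Z) (σ σ' : ℝ → Z) : EReal :=
  Filter.liminf (fun p : ℝ × ℝ => ((gromovProd x (σ p.1) (σ' p.2) : ℝ) : EReal))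
    (Filter.atTop ×ˢ Filter.atTop)

/-- Extended Gromov product (with respect to `x`) of a point `y ∈ Z` and the boundary
point represented by the geodesic ray `σ`. -/
noncomputable def ptRayGP {Z : Type*} [MetricSpace Z] (x y : Z) (σ : ℝ → Z) : EReal :=
  Filter.liminf (fun t : ℝ => ((gromovProd x y (σ t) : ℝ) : EReal)) Filter.atTop

/-- The visual quasi-metric `d_x(ξ,η) = exp(-2⟨ξ,η⟩_x)` on the Gromov boundary,
for boundary points represented by geodesic rays. -/
noncomputable def visDist {Z : Type*} [MetricSpace Z] (x : Z) (σ σ' : ℝ → Z) : ℝ :=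
  if extGP x σ σ' = ⊤ then 0 else Real.exp (-2 * (extGP x σ σ').toReal)

/-- Busemann functions of asymptotic geodesic rays agree up to `40δ`. -/
theorem stmt7 {Z : Type*} [MetricSpace Z] [ProperSpace Z] {δ : ℝ}
    (hgeo : IsGeodesicSpace Z) (hhyp : IsDeltaHyperbolic Z δ)
    (σ σ' : ℝ → Z) (hσ : IsGeodesicRay σ) (hσ' : IsGeodesicRay σ')
    (hasym : AsymptoticRays σ σ')
    (y z : Z) (b b' : ℝ)
    (hb : Filter.Tendsto (fun t => dist y (σ t) - dist z (σ t)) Filter.atTop (nhds b))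
    (hb' : Filter.Tendsto (fun t => dist y (σ' t) - dist z (σ' t)) Filter.atTop (nhds b')) :
    |b - b'| ≤ 40 * δ := by
  classical
  -- δ ≥ 0
  have hδ : 0 ≤ δ := by
    have h := hhyp (σ 0) (σ 0) (σ 0) (σ 0)
    simp [gromovProd, dist_self] at h
    linarith
  set C : ℝ := (EMetric.hausdorffEdist (σ '' Set.Ici 0) (σ' '' Set.Ici 0) + 1).toReal with hC
  have hHne : EMetric.hausdorffEdist (σ '' Set.Ici 0) (σ' '' Set.Ici 0) + 1 ≠ ⊤ :=
    ENNReal.add_ne_top.2 ⟨hasym, ENNReal.one_ne_top⟩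
  have hex : ∀ t : ℝ, 0 ≤ t → ∃ s : ℝ, 0 ≤ s ∧ dist (σ t) (σ' s) ≤ C := by
    intro t ht
    have hmem : σ t ∈ σ '' Set.Ici 0 := ⟨t, ht, rfl⟩
    have hlt : EMetric.hausdorffEdist (σ '' Set.Ici 0) (σ' '' Set.Ici 0)
        < EMetric.hausdorffEdist (σ '' Set.Ici 0) (σ' '' Set.Ici 0) + 1 :=
      ENNReal.lt_add_right hasym one_ne_zero
    obtain ⟨q, hq, hqlt⟩ := EMetric.exists_edist_lt_of_hausdorffEdist_lt hmem hlt
    obtain ⟨s, hs, rfl⟩ := hq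
    refine ⟨s, hs, ?_⟩
    rw [dist_edist]
    exact ENNReal.toReal_mono hHne hqlt.le
  choose! s hs using hex
  -- s t → ∞
  have hst : ∀ t : ℝ, 0 ≤ t → t - (dist (σ 0) (σ' 0) + C) ≤ s t := by
    intro t ht
    obtain ⟨hs0, hsd⟩ := hs t ht
    have h1 : dist (σ 0) (σ t) = t := by
      rw [hσ 0 t le_rfl ht, zero_sub, abs_neg, abs_of_nonneg ht]
    have h2 : dist (σ' 0) (σ' (s t)) = s t := by
      rw [hσ' 0 (s t) le_rfl hs0, zero_sub, abs_neg, abs_of_nonneg hs0]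
    have t1 := dist_triangle (σ 0) (σ' 0) (σ' (s t))
    have t2 := dist_triangle (σ' 0) (σ' (s t)) (σ t)
    have t3 := dist_triangle (σ 0) (σ' 0) (σ t)
    have c1 := dist_comm (σ 0) (σ' 0)
    have c2 := dist_comm (σ t) (σ' (s t))
    linarith
  have hts : Filter.Tendsto s Filter.atTop Filter.atTop := by
    apply Filter.tendsto_atTop_mono' _ _
        (Filter.tendsto_atTop_add_const_right _ (-(dist (σ 0) (σ' 0) + C)) Filter.tendsto_id)
    filter_upwards [Filter.eventually_ge_atTop (0 : ℝ)] with t ht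
    have := hst t ht
    simp only [id]
    linarith
  have hv : Filter.Tendsto (fun t => dist y (σ' (s t)) - dist z (σ' (s t)))
      Filter.atTop (nhds b') := hb'.comp hts
  -- eventual bound
  have hev : ∀ᶠ t in Filter.atTop,
      |(dist y (σ t) - dist z (σ t)) - (dist y (σ' (s t)) - dist z (σ' (s t)))| ≤ 2 * δ := by
    filter_upwards [Filter.eventually_ge_atTop (max 0 (dist z y + C + dist z (σ 0)))] with t ht
    have ht0 : (0 : ℝ) ≤ t := le_trans (le_max_left _ _) ht
    have htT : dist z y + C + dist z (σ 0) ≤ t := le_trans (le_max_right _ _) ht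
    obtain ⟨hs0, hsd⟩ := hs t ht0
    set p := σ t with hp
    set q := σ' (s t) with hq
    have h1 : dist (σ 0) p = t := by
      rw [hp, hσ 0 t le_rfl ht0, zero_sub, abs_neg, abs_of_nonneg ht0]
    have hzp : t - dist z (σ 0) ≤ dist z p := by
      have := dist_triangle (σ 0) z p
      have := dist_comm z (σ 0)
      linarith
    have hzq : dist z p - C ≤ dist z q := by
      have := dist_triangle z q p
      have := dist_comm q p
      linarith
    have hgp_le : gromovProd z y p ≤ dist z y := by
      have := dist_triangle z y p
      simp only [gromovProd]
      linarith
    have hgp'_le : gromovProd z y q ≤ dist z y := by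
      have := dist_triangle z y q
      simp only [gromovProd]
      linarith
    have hgpq : dist z y ≤ gromovProd z p q := by
      simp only [gromovProd]
      linarith
    have hgqp : dist z y ≤ gromovProd z q p := by
      simp only [gromovProd]
      have := dist_comm p q
      linarith
    have h1' := hhyp y z p q
    rw [min_eq_left (hgp_le.trans hgpq)] at h1'
    have h2' := hhyp y z q p
    rw [min_eq_left (hgp'_le.trans hgqp)] at h2'
    simp only [gromovProd] at h1' h2'
    rw [abs_le]
    constructor <;> linarith
  have hlim : Filter.Tendsto
      (fun t => |(dist y (σ t) - dist z (σ t)) - (dist y (σ' (s t)) - dist z (σ' (s t)))|)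
      Filter.atTop (nhds |b - b'|) := (hb.sub hv).abs
  have hfin : |b - b'| ≤ 2 * δ := le_of_tendsto hlim hev
  linarith
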